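/- arXiv:2506.06033 — 2 statements merged into one kernel-verified Lean document; each statement's English description precedes it below -/
import Mathlib

section
/- Let (Ω, μ) be a probability space and let A, B, Y, E be measurable events. Assume the consistency conditions A ∩ E = Y ∩ E and B ∩ Eᶜ = Yᶜ ∩ Eᶜ, and the independence conditions μ(A ∩ (Yᶜ ∩ Eᶜ)) = μ(A) · μ(Yᶜ ∩ Eᶜ) and μ(B ∩ (Y ∩ E)) = μ(B) · μ(Y ∩ E). Then the probability of joint sufficiency and necessity PNS := μ(A ∩ B) satisfies PNS = μ(Yᶜ ∩ Eᶜ) · PS + μ(Y ∩ E) · PN, where PS := μ(A) is the probability of sufficiency and PN := μ(B) is the probability of necessity. -/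
open MeasureTheory

theorem stmt_1 {Ω : Type*} [MeasurableSpace Ω] (μ : Measure Ω)
    [IsProbabilityMeasure μ] (A B Y E : Set Ω)
    (hAm : MeasurableSet A) (hBm : MeasurableSet B)
    (hYm : MeasurableSet Y) (hEm : MeasurableSet E)
    (hconsA : A ∩ E = Y ∩ E) (hconsB : B ∩ Eᶜ = Yᶜ ∩ Eᶜ)
    (hindA : μ (A ∩ (Yᶜ ∩ Eᶜ)) = μ A * μ (Yᶜ ∩ Eᶜ))
    (hindB : μ (B ∩ (Y ∩ E)) = μ B * μ (Y ∩ E)) :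
    μ (A ∩ B) = μ (Yᶜ ∩ Eᶜ) * μ A + μ (Y ∩ E) * μ B := by
  have h1 : A ∩ B ∩ E = B ∩ (Y ∩ E) := by
    rw [← hconsA]; ext x; simp only [Set.mem_inter_iff]; tauto
  have h2 : A ∩ B ∩ Eᶜ = A ∩ (Yᶜ ∩ Eᶜ) := by
    rw [← hconsB]; ext x; simp only [Set.mem_inter_iff, Set.mem_compl_iff]; tauto
  have h := measure_inter_add_diff (μ := μ) (A ∩ B) hEm
  rw [Set.diff_eq, h1, h2, hindA, hindB] at h
  rw [← h]; ring
end

section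
/- Let α be a type with decidable equality and let R : Finset α → Finset α → Prop be a relation on finsets of α that is reflexive, transitive, union-dominating (R (A ∪ B) A and R (A ∪ B) B for all A, B), and conjunctive (if R S A and R S B then R S (A ∪ B)). Define a merge step on multisets of finsets: a multiset M steps to M' if M' is obtained from M by removing two elements A and B and inserting C, where either (C = A and R A B), or (C = B and R B A), or C = A ∪ B. Let D be a nonempty finset of α and let M₀ be the multiset consisting of the singletons {x} for x ∈ D. If some finite sequence of merge steps starting from M₀ reaches the one-element multiset {T}, then R T {x} holds for every x ∈ D, and consequently R T D holds. -/
/-- One merge step of the tree-based approximation algorithm: remove two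
elements `A`, `B` from the multiset and insert `C`, where `C = A` if
`R A B`, `C = B` if `R B A`, or `C = A ∪ B` otherwise. -/
def MergeStep {α : Type*} [DecidableEq α] (R : Finset α → Finset α → Prop)
    (M M' : Multiset (Finset α)) : Prop :=
  ∃ A B C : Finset α, A ∈ M ∧ B ∈ M.erase A ∧
    ((C = A ∧ R A B) ∨ (C = B ∧ R B A) ∨ C = A ∪ B) ∧
    M' = C ::ₘ (M.erase A).erase B

theorem stmt_4 {α : Type*} [DecidableEq α] (R : Finset α → Finset α → Prop)
    (hrefl : ∀ S : Finset α, R S S)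
    (htrans : ∀ S T U : Finset α, R S T → R T U → R S U)
    (hdom : ∀ A B : Finset α, R (A ∪ B) A ∧ R (A ∪ B) B)
    (hconj : ∀ S A B : Finset α, R S A → R S B → R S (A ∪ B))
    (D : Finset α) (hD : D.Nonempty) (T : Finset α)
    (hreach : Relation.ReflTransGen (MergeStep R)
      (D.val.map (fun x => ({x} : Finset α))) {T}) :
    (∀ x ∈ D, R T {x}) ∧ R T D := by
  -- Invariant: every x ∈ D is dominated by some element of the multiset.
  have key : ∀ M M', Relation.ReflTransGen (MergeStep R) M M' →
      ∀ x, (∃ S ∈ M, R S ({x} : Finset α)) → ∃ S ∈ M', R S ({x} : Finset α) := by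
    intro M M' h
    induction h with
    | refl => exact fun x hx => hx
    | tail _ hstep ih =>
      intro x hx
      obtain ⟨S, hS, hRS⟩ := ih x hx
      obtain ⟨A, B, C, hA, hB, hC, hM'⟩ := hstep
      have hRC : ∀ S₀, (S₀ = A ∨ S₀ = B) → R S₀ {x} → R C {x} := by
        rintro S₀ hS₀ hR
        rcases hC with ⟨hC1, hAB⟩ | ⟨hC1, hBA⟩ | hC1 <;> subst hC1 <;>
          rcases hS₀ with rfl | rfl
        · exact hR
        · exact htrans _ _ _ hAB hR
        · exact htrans _ _ _ hBA hR
        · exact hR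
        · exact htrans _ _ _ (hdom S₀ B).1 hR
        · exact htrans _ _ _ (hdom A S₀).2 hR
      subst hM'
      by_cases h1 : S = A
      · exact ⟨C, Multiset.mem_cons_self _ _, hRC S (Or.inl h1) hRS⟩
      · have hS' : S ∈ Multiset.erase _ A := Multiset.mem_erase_of_ne h1 |>.mpr hS
        by_cases h2 : S = B
        · exact ⟨C, Multiset.mem_cons_self _ _, hRC S (Or.inr h2) hRS⟩
        · exact ⟨S, Multiset.mem_cons_of_mem ((Multiset.mem_erase_of_ne h2).mpr hS'), hRS⟩
  have hsing : ∀ x ∈ D, R T {x} := by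
    intro x hx
    have hx0 : ∃ S ∈ D.val.map (fun x => ({x} : Finset α)), R S ({x} : Finset α) :=
      ⟨{x}, Multiset.mem_map_of_mem _ hx, hrefl _⟩
    obtain ⟨S, hS, hRS⟩ := key _ _ hreach x hx0
    rw [Multiset.mem_singleton] at hS
    subst hS; exact hRS
  refine ⟨hsing, ?_⟩
  -- From singletons to the whole set.
  have gen : ∀ E : Finset α, E.Nonempty → (∀ x ∈ E, R T {x}) → R T E := by
    intro E
    induction E using Finset.induction_on with
    | empty => exact fun h => absurd h (by simp)
    | @insert a s ha ih =>
      intro _ hall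
      rcases s.eq_empty_or_nonempty with rfl | hs
      · simpa using hall a (by simp)
      · have : R T ({a} ∪ s) :=
          hconj _ _ _ (hall a (by simp)) (ih hs (fun x hx => hall x (by simp [hx])))
        rw [Finset.insert_eq]; exact this
  exact gen D hD hsing
end
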